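/- Let E be a real inner product space, let t₀ ∈ ℝ, T > 0, b̃ ≥ 0, and let μ : [t₀, t₀+T) → ℝ be differentiable with μ(t) > 0 and μ′(t) ≤ b̃·μ(t)² for all t ∈ [t₀, t₀+T). Let k, k* > 0 satisfy k ≥ k*/2 + b̃ + 1/2. Let d̄ ≥ 0 and let χ : [t₀, t₀+T) → E and d : [t₀, t₀+T) → E be such that χ is differentiable with χ′(t) = −k·μ(t)·χ(t) + d(t) and ‖d(t)‖ ≤ d̄ for all t ∈ [t₀, t₀+T). Then for every t ∈ [t₀, t₀+T), ‖χ(t)‖ ≤ (μ(t₀)²·‖χ(t₀)‖² + d̄²/k*)^{1/2} · μ(t)⁻¹. -/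

import Mathlib

set_option maxHeartbeats 4000000


open Set

/-- A Gronwall-type comparison lemma: if `f' ≤ -m f` on `(a,b)` with `m` continuous
and `f a ≤ 0`, then `f b ≤ 0`. -/
lemma gronwall_nonpos_aux {a b : ℝ} (hab : a < b) (f f' m : ℝ → ℝ)
    (hf : ∀ s ∈ Icc a b, HasDerivAt f (f' s) s)
    (hm : ContinuousOn m (Icc a b))
    (hbound : ∀ s ∈ Ioo a b, f' s ≤ -(m s * f s))
    (hfa : f a ≤ 0) : f b ≤ 0 := by
  set M : ℝ → ℝ := fun s => ∫ u in a..s, m u with hMdef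
  have huIcc : uIcc a b = Icc a b := uIcc_of_le hab.le
  have hint : IntervalIntegrable m MeasureTheory.volume a b := by
    apply ContinuousOn.intervalIntegrable; rwa [huIcc]
  have hMcont : ContinuousOn M (Icc a b) := by
    rw [← huIcc]
    exact intervalIntegral.continuousOn_primitive_interval' hint
      (by rw [huIcc]; exact ⟨le_refl _, hab.le⟩)
  have hmIoo : ContinuousOn m (Ioo a b) := hm.mono Ioo_subset_Icc_self
  have hMderiv : ∀ s ∈ Ioo a b, HasDerivAt M (m s) s := by
    intro s hs
    apply intervalIntegral.integral_hasDerivAt_right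
    · apply ContinuousOn.intervalIntegrable
      apply hm.mono
      rw [uIcc_of_le hs.1.le]
      exact Icc_subset_Icc le_rfl hs.2.le
    · exact AEStronglyMeasurable.stronglyMeasurableAtFilter_of_mem
        (hmIoo.aestronglyMeasurable isOpen_Ioo.measurableSet)
        (isOpen_Ioo.mem_nhds hs)
    · exact hmIoo.continuousAt (isOpen_Ioo.mem_nhds hs)
  set g : ℝ → ℝ := fun s => f s * Real.exp (M s) with hgdef
  have hfc : ContinuousOn f (Icc a b) := fun s hs =>
    ((hf s hs).continuousAt).continuousWithinAt
  have hgcont : ContinuousOn g (Icc a b) := hfc.mul hMcont.rexp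
  have hgderiv : ∀ s ∈ Ioo a b, HasDerivAt g
      (f' s * Real.exp (M s) + f s * (Real.exp (M s) * m s)) s := by
    intro s hs
    exact (hf s (Ioo_subset_Icc_self hs)).mul ((hMderiv s hs).exp)
  have hganti : AntitoneOn g (Icc a b) := by
    apply antitoneOn_of_deriv_nonpos (convex_Icc a b) hgcont
    · intro s hs
      rw [interior_Icc] at hs
      exact ((hgderiv s hs).differentiableAt).differentiableWithinAt
    · intro s hs
      rw [interior_Icc] at hs
      rw [(hgderiv s hs).deriv]
      have hb := hbound s hs
      have he : 0 < Real.exp (M s) := Real.exp_pos _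
      nlinarith [mul_le_mul_of_nonneg_right hb he.le]
  have h1 : g b ≤ g a :=
    hganti (left_mem_Icc.mpr hab.le) (right_mem_Icc.mpr hab.le) hab.le
  have hMa : M a = 0 := by simp [hMdef]
  have hga : g a ≤ 0 := by
    simp only [hgdef, hMa, Real.exp_zero, mul_one]; exact hfa
  have hgb : g b ≤ 0 := le_trans h1 hga
  have he : 0 < Real.exp (M b) := Real.exp_pos _
  by_contra hcon
  push_neg at hcon
  have : 0 < g b := by
    simp only [hgdef]
    exact mul_pos hcon he
  linarith

/-- Scalar inequality used for the Lyapunov derivative estimate. -/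
lemma lyap_ineq_aux (btil k kstar dbar ms m's a ip : ℝ)
    (hkk : kstar / 2 + btil + 1 / 2 ≤ k)
    (hμs : 0 < ms) (hμ's : m's ≤ btil * ms ^ 2)
    (hip : ip ≤ a * dbar) :
    2 * ms ^ 1 * m's * a ^ 2
      + ms ^ 2 * ((-(k * ms) * a ^ 2 + ip) + (-(k * ms) * a ^ 2 + ip))
      ≤ -(kstar * ms * (ms ^ 2 * a ^ 2)) + ms * dbar ^ 2 := by
  nlinarith [mul_nonneg hμs.le (sq_nonneg (ms * a - dbar)),
    mul_nonneg (mul_nonneg (by linarith : (0:ℝ) ≤ btil * ms ^ 2 - m's)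
      (by positivity : (0:ℝ) ≤ 2 * ms)) (sq_nonneg a),
    mul_le_mul_of_nonneg_left hip (by positivity : (0:ℝ) ≤ 2 * ms ^ 2),
    mul_nonneg (by linarith : (0:ℝ) ≤ 2 * k - 2 * btil - 1 - kstar)
      (mul_nonneg (pow_pos hμs 3).le (sq_nonneg a))]

/-- Prescribed-time convergence of the disturbed system χ̇ = −kμχ + d
(Remark 2 of the paper). -/
theorem prescribed_time_disturbed_system
    {E : Type*} [NormedAddCommGroup E] [InnerProductSpace ℝ E]
    (t₀ T btil : ℝ) (hT : 0 < T) (hbtil : 0 ≤ btil)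
    (μ μ' : ℝ → ℝ)
    (hμderiv : ∀ t ∈ Ico t₀ (t₀ + T), HasDerivAt μ (μ' t) t)
    (hμpos : ∀ t ∈ Ico t₀ (t₀ + T), 0 < μ t)
    (hμ' : ∀ t ∈ Ico t₀ (t₀ + T), μ' t ≤ btil * (μ t) ^ 2)
    (k kstar : ℝ) (hk : 0 < k) (hkstar : 0 < kstar)
    (hkk : kstar / 2 + btil + 1 / 2 ≤ k)
    (dbar : ℝ) (hdbar : 0 ≤ dbar)
    (χ d : ℝ → E)
    (hχ : ∀ t ∈ Ico t₀ (t₀ + T),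
      HasDerivAt χ (-(k * μ t) • χ t + d t) t)
    (hd : ∀ t ∈ Ico t₀ (t₀ + T), ‖d t‖ ≤ dbar) :
    ∀ t ∈ Ico t₀ (t₀ + T),
      ‖χ t‖ ≤ (μ t₀ ^ 2 * ‖χ t₀‖ ^ 2 + dbar ^ 2 / kstar) ^ ((1 : ℝ) / 2)
        * (μ t)⁻¹ := by
  intro t ht
  obtain ⟨ht₀, htT⟩ := ht
  have hC0 : (0:ℝ) ≤ μ t₀ ^ 2 * ‖χ t₀‖ ^ 2 + dbar ^ 2 / kstar := by positivity
  have hμt : 0 < μ t := hμpos t ⟨ht₀, htT⟩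
  -- main bound : μ t ^ 2 * ‖χ t‖ ^ 2 ≤ C
  have key : μ t ^ 2 * ‖χ t‖ ^ 2 ≤ μ t₀ ^ 2 * ‖χ t₀‖ ^ 2 + dbar ^ 2 / kstar := by
    rcases eq_or_lt_of_le ht₀ with h | hlt
    · rw [← h]
      have : (0:ℝ) ≤ dbar ^ 2 / kstar := by positivity
      linarith
    · have hsub : Icc t₀ t ⊆ Ico t₀ (t₀ + T) :=
        fun s hs => ⟨hs.1, lt_of_le_of_lt hs.2 htT⟩
      have hfin := gronwall_nonpos_aux hlt
        (fun s => μ s ^ 2 * (inner ℝ (χ s) (χ s) : ℝ)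
          - (μ t₀ ^ 2 * ‖χ t₀‖ ^ 2 + dbar ^ 2 / kstar))
        (fun s => 2 * μ s ^ 1 * μ' s * (inner ℝ (χ s) (χ s) : ℝ)
          + μ s ^ 2 * ((inner ℝ (χ s) (-(k * μ s) • χ s + d s) : ℝ)
              + (inner ℝ (-(k * μ s) • χ s + d s) (χ s) : ℝ)))
        (fun s => kstar * μ s)
        (fun s hs => (((hμderiv s (hsub hs)).pow 2).mul
            ((hχ s (hsub hs)).inner ℝ (hχ s (hsub hs)))).sub_const _)
        (continuousOn_const.mul (fun s hs =>
          ((hμderiv s (hsub hs)).continuousAt).continuousWithinAt))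
        ?_ ?_
      · have := hfin
        beta_reduce at this
        rw [real_inner_self_eq_norm_sq] at this
        linarith
      · intro s hs
        have hsmem : s ∈ Ico t₀ (t₀ + T) := hsub ⟨hs.1.le, hs.2.le⟩
        have hμs : 0 < μ s := hμpos s hsmem
        have hμ's : μ' s ≤ btil * μ s ^ 2 := hμ' s hsmem
        have hds : ‖d s‖ ≤ dbar := hd s hsmem
        have hip : (inner ℝ (χ s) (d s) : ℝ) ≤ ‖χ s‖ * dbar :=
          le_trans (real_inner_le_norm _ _)
            (mul_le_mul_of_nonneg_left hds (norm_nonneg _))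
        have h1 : (inner ℝ (χ s) (-(k * μ s) • χ s + d s) : ℝ)
            = -(k * μ s) * ‖χ s‖ ^ 2 + (inner ℝ (χ s) (d s) : ℝ) := by
          rw [inner_add_right, real_inner_smul_right, real_inner_self_eq_norm_sq]
        have h2 : (inner ℝ (-(k * μ s) • χ s + d s) (χ s) : ℝ)
            = -(k * μ s) * ‖χ s‖ ^ 2 + (inner ℝ (χ s) (d s) : ℝ) := by
          rw [inner_add_left, real_inner_smul_left, real_inner_self_eq_norm_sq,
            real_inner_comm]
        beta_reduce
        rw [h1, h2, real_inner_self_eq_norm_sq]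
        -- first show W' ≤ -kstar μ W + μ dbar²
        have hstep : 2 * μ s ^ 1 * μ' s * ‖χ s‖ ^ 2
            + μ s ^ 2 * ((-(k * μ s) * ‖χ s‖ ^ 2 + (inner ℝ (χ s) (d s) : ℝ))
                + (-(k * μ s) * ‖χ s‖ ^ 2 + (inner ℝ (χ s) (d s) : ℝ)))
            ≤ -(kstar * μ s * (μ s ^ 2 * ‖χ s‖ ^ 2)) + μ s * dbar ^ 2 :=
          lyap_ineq_aux btil k kstar dbar (μ s) (μ' s) ‖χ s‖ _ hkk hμs hμ's hip
        have hCge : μ s * dbar ^ 2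
            ≤ kstar * μ s * (μ t₀ ^ 2 * ‖χ t₀‖ ^ 2 + dbar ^ 2 / kstar) := by
          have h8 : dbar ^ 2 / kstar ≤ μ t₀ ^ 2 * ‖χ t₀‖ ^ 2 + dbar ^ 2 / kstar := by
            nlinarith [sq_nonneg (μ t₀ * ‖χ t₀‖), sq_nonneg (μ t₀), sq_nonneg ‖χ t₀‖,
              mul_nonneg (sq_nonneg (μ t₀)) (sq_nonneg ‖χ t₀‖)]
          have h9 := mul_le_mul_of_nonneg_left h8 (le_of_lt (mul_pos hkstar hμs))
          have h10 : kstar * μ s * (dbar ^ 2 / kstar) = μ s * dbar ^ 2 := by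
            field_simp
          linarith
        linarith [hstep, hCge]
      · have : (0:ℝ) ≤ dbar ^ 2 / kstar := by positivity
        beta_reduce
        rw [real_inner_self_eq_norm_sq]
        linarith
  -- conclude
  have h5 : (μ t₀ ^ 2 * ‖χ t₀‖ ^ 2 + dbar ^ 2 / kstar) ^ ((1 : ℝ) / 2)
      = Real.sqrt (μ t₀ ^ 2 * ‖χ t₀‖ ^ 2 + dbar ^ 2 / kstar) :=
    (Real.sqrt_eq_rpow _).symm
  rw [h5]
  have h6 : μ t * ‖χ t‖ ≤ Real.sqrt (μ t₀ ^ 2 * ‖χ t₀‖ ^ 2 + dbar ^ 2 / kstar) := by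
    have heq : μ t * ‖χ t‖ = Real.sqrt ((μ t * ‖χ t‖) ^ 2) := by
      rw [Real.sqrt_sq (by positivity)]
    rw [heq]
    apply Real.sqrt_le_sqrt
    rw [mul_pow]
    exact key
  rw [← sub_nonneg]
  have h7 : Real.sqrt (μ t₀ ^ 2 * ‖χ t₀‖ ^ 2 + dbar ^ 2 / kstar) * (μ t)⁻¹ - ‖χ t‖
      = (Real.sqrt (μ t₀ ^ 2 * ‖χ t₀‖ ^ 2 + dbar ^ 2 / kstar) - μ t * ‖χ t‖) * (μ t)⁻¹ := by
    field_simp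
  rw [h7]
  exact mul_nonneg (by linarith) (by positivity)
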